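/- The twisted Frobenius–Schur element ν lies in the centre of ℂ^{θ⁻¹}[G]; explicitly, for all g, h ∈ G one has Σ_{ς ∈ Ĝ∖G, ς² = hgh⁻¹} λ(ς)/θ̂(ς,ς) = τ(θ)([h]g) · Σ_{ς ∈ Ĝ∖G, ς² = g} λ(ς)/θ̂(ς,ς). -/

import Mathlib

lemma invmul_aux (w z : ℂ) (hz : z ≠ 0) : z⁻¹ * w * z = w := by
  rw [mul_comm z⁻¹ w, mul_assoc, inv_mul_cancel₀ hz, mul_one]

lemma key6 {Ghat : Type*} [Group Ghat]
    (π : Ghat →* ℤˣ)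
    (θ : Ghat → Ghat → ℂ)
    (hnorm : ∀ a b : Ghat, ‖θ a b‖ = 1)
    (hθe : ∀ ω : Ghat, θ ω 1 = 1) (hθe' : ∀ ω : Ghat, θ 1 ω = 1)
    (hcoc : ∀ ω₃ ω₂ ω₁ : Ghat, θ ω₃ ω₂ * θ (ω₃ * ω₂) ω₁ =
      θ ω₂ ω₁ ^ ((π ω₃ : ℤˣ) : ℤ) * θ ω₃ (ω₂ * ω₁))
    (g h : Ghat) (hg : π g = 1) (hh : π h = 1)
    (ς : Ghat) (hς : π ς = -1) (hς2 : ς ^ 2 = g) :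
    θ (h * ς * h⁻¹) (h * ς * h⁻¹) * θ (h * g * h⁻¹) h = θ ς ς * θ h g := by
  have hne : ∀ a b : Ghat, θ a b ≠ 0 := by
    intro a b h0
    have := hnorm a b
    rw [h0] at this; simp at this
  have hπt : π (h * ς * h⁻¹) = -1 := by simp [map_mul, hh, hς]
  have hπhg : π (h * g * h⁻¹) = 1 := by simp [map_mul, hh, hg]
  have hzh : ((π h : ℤˣ) : ℤ) = 1 := by rw [hh]; rfl
  have hzς : ((π ς : ℤˣ) : ℤ) = -1 := by rw [hς]; rfl
  have hzt : ((π (h * ς * h⁻¹) : ℤˣ) : ℤ) = -1 := by rw [hπt]; rfl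
  have hzhg : ((π (h * g * h⁻¹) : ℤˣ) : ℤ) = 1 := by rw [hπhg]; rfl
  have hsq : ς * ς = g := by rw [← sq, hς2]
  -- A : θ h ς * θ (h*ς) ς = θ ς ς * θ h g
  have A := hcoc h ς ς
  rw [hzh, zpow_one, hsq] at A
  -- B : θ t (h*ς) * θ (h*g) h⁻¹ = (θ (h*ς) h⁻¹)⁻¹ * θ t t
  have B := hcoc (h * ς * h⁻¹) (h * ς) h⁻¹
  rw [hzt, zpow_neg_one,
    show (h : Ghat) * ς * h⁻¹ * (h * ς) = h * g from by rw [← hsq]; group,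
    show (h : Ghat) * ς * h⁻¹ = h * ς * h⁻¹ from rfl] at B
  have B' : θ (h*ς*h⁻¹) (h*ς) * θ (h*g) h⁻¹ * θ (h*ς) h⁻¹ = θ (h*ς*h⁻¹) (h*ς*h⁻¹) := by
    rw [B]; exact invmul_aux _ _ (hne _ _)
  -- C : θ t h * θ (h*ς) ς = (θ h ς)⁻¹ * θ t (h*ς)
  have C := hcoc (h * ς * h⁻¹) h ς
  rw [hzt, zpow_neg_one,
    show (h : Ghat) * ς * h⁻¹ * h = h * ς from by group] at C
  have C' : θ (h*ς*h⁻¹) h * θ (h*ς) ς * θ h ς = θ (h*ς*h⁻¹) (h*ς) := by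
    rw [C]; exact invmul_aux _ _ (hne _ _)
  -- D1 : θ h (ς*h⁻¹) * θ t h = θ (ς*h⁻¹) h * θ h ς
  have D1 := hcoc h (ς * h⁻¹) h
  rw [hzh, zpow_one,
    show (h : Ghat) * (ς * h⁻¹) = h * ς * h⁻¹ from by group,
    show (ς : Ghat) * h⁻¹ * h = ς from by group] at D1
  -- D2 : θ ς h⁻¹ * θ (ς*h⁻¹) h = (θ h⁻¹ h)⁻¹
  have D2 := hcoc ς h⁻¹ h
  rw [hzς, zpow_neg_one, inv_mul_cancel, hθe] at D2
  have D2' : θ ς h⁻¹ * θ (ς*h⁻¹) h * θ h⁻¹ h = 1 := by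
    rw [D2, mul_one]; exact inv_mul_cancel₀ (hne _ _)
  -- E1 : θ h ς * θ (h*ς) h⁻¹ = θ ς h⁻¹ * θ h (ς*h⁻¹)
  have E1 := hcoc h ς h⁻¹
  rw [hzh, zpow_one] at E1
  -- D' : θ t h * (θ h⁻¹ h * θ (h*ς) h⁻¹) = 1
  have D'' : θ h (ς*h⁻¹) * θ h ς *
      (θ (h*ς*h⁻¹) h * (θ h⁻¹ h * θ (h*ς) h⁻¹)) = θ h (ς*h⁻¹) * θ h ς * 1 := by
    linear_combination (θ h⁻¹ h * θ (h*ς) h⁻¹ * θ h ς) * D1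
      + (θ h (ς*h⁻¹) * θ h ς) * D2'
      + (θ (ς*h⁻¹) h * θ h ς * θ h⁻¹ h) * E1
  have D' : θ (h*ς*h⁻¹) h * (θ h⁻¹ h * θ (h*ς) h⁻¹) = 1 :=
    mul_left_cancel₀ (mul_ne_zero (hne _ _) (hne _ _)) D''
  -- F : θ (h*g*h⁻¹) h * θ (h*g) h⁻¹ = θ h h⁻¹
  have F := hcoc (h * g * h⁻¹) h h⁻¹
  rw [hzhg, zpow_one, mul_inv_cancel, hθe,
    show (h : Ghat) * g * h⁻¹ * h = h * g from by group, mul_one] at F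
  -- G : θ h h⁻¹ = θ h⁻¹ h
  have G := hcoc h h⁻¹ h
  rw [hzh, zpow_one, mul_inv_cancel, inv_mul_cancel, hθe, hθe'] at G
  rw [mul_one] at G
  linear_combination (-(θ (h*g*h⁻¹) h)) * B'
    + (θ (h*ς*h⁻¹) (h*ς) * θ (h*ς) h⁻¹) * F
    + (θ (h*ς*h⁻¹) (h*ς) * θ (h*ς) h⁻¹) * G
    - (θ (h*ς) h⁻¹ * θ h⁻¹ h) * C'
    + (θ (h*ς) ς * θ h ς) * D'
    + A


/-- The twisted Frobenius–Schur element
`ν = Σ_{ς ∈ Ĝ∖G} (λ(ς)/θ(ς,ς)) l_{ς²}` is a θ-twisted class function, i.e. lies in the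
centre of `ℂ^{θ⁻¹}[G]`: for all `g, h ∈ G`,
`Σ_{ς ∈ Ĝ∖G, ς² = hgh⁻¹} λ(ς)/θ(ς,ς) = τ(θ)([h]g) ⬝ Σ_{ς ∈ Ĝ∖G, ς² = g} λ(ς)/θ(ς,ς)`. -/
theorem stmt6 {Ghat : Type*} [Group Ghat] [Fintype Ghat] [DecidableEq Ghat]
    (π : Ghat →* ℤˣ) (hπ : Function.Surjective π)
    (θ : Ghat → Ghat → ℂ)
    (hnorm : ∀ a b : Ghat, ‖θ a b‖ = 1)
    (hθe : ∀ ω : Ghat, θ ω 1 = 1) (hθe' : ∀ ω : Ghat, θ 1 ω = 1)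
    (hcoc : ∀ ω₃ ω₂ ω₁ : Ghat, θ ω₃ ω₂ * θ (ω₃ * ω₂) ω₁ =
      θ ω₂ ω₁ ^ ((π ω₃ : ℤˣ) : ℤ) * θ ω₃ (ω₂ * ω₁))
    (lam : Ghat →* ℂ) (hlam : ∀ ω : Ghat, ‖lam ω‖ = 1)
    (g h : Ghat) (hg : π g = 1) (hh : π h = 1) :
    ∑ ς ∈ Finset.univ.filter (fun ς : Ghat => π ς = -1 ∧ ς ^ 2 = h * g * h⁻¹),
        lam ς / θ ς ς =
      (θ (h * g * h⁻¹) h / θ h g) *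
        ∑ ς ∈ Finset.univ.filter (fun ς : Ghat => π ς = -1 ∧ ς ^ 2 = g),
          lam ς / θ ς ς := by
  have hne : ∀ a b : Ghat, θ a b ≠ 0 := by
    intro a b h0
    have := hnorm a b
    rw [h0] at this; simp at this
  rw [Finset.mul_sum]
  refine Finset.sum_nbij' (fun ς => h⁻¹ * ς * h) (fun ς => h * ς * h⁻¹) ?_ ?_ ?_ ?_ ?_
  · intro a ha
    simp only [Finset.mem_filter, Finset.mem_univ, true_and] at ha ⊢
    obtain ⟨ha1, ha2⟩ := ha
    constructor
    · simp [map_mul, hh, ha1]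
    · rw [sq] at ha2 ⊢
      rw [show h⁻¹ * a * h * (h⁻¹ * a * h) = h⁻¹ * (a * a) * h from by group, ha2]
      group
  · intro a ha
    simp only [Finset.mem_filter, Finset.mem_univ, true_and] at ha ⊢
    obtain ⟨ha1, ha2⟩ := ha
    constructor
    · simp [map_mul, hh, ha1]
    · rw [sq] at ha2 ⊢
      rw [show h * a * h⁻¹ * (h * a * h⁻¹) = h * (a * a) * h⁻¹ from by group, ha2]
  · intro a _; group
  · intro a _; group
  · intro a ha
    simp only [Finset.mem_filter, Finset.mem_univ, true_and] at ha
    obtain ⟨ha1, ha2⟩ := ha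
    set b := h⁻¹ * a * h with hb
    have hab : a = h * b * h⁻¹ := by rw [hb]; group
    have hbπ : π b = -1 := by simp [hb, map_mul, hh, ha1]
    have hb2 : b ^ 2 = g := by
      rw [sq, hb, show h⁻¹ * a * h * (h⁻¹ * a * h) = h⁻¹ * (a * a) * h from by group,
        ← sq, ha2]
      group
    have key := key6 π θ hnorm hθe hθe' hcoc g h hg hh b hbπ hb2
    have hlh : lam h ≠ 0 := by
      intro h0; have := hlam h; rw [h0] at this; simp at this
    have hlab : lam a = lam b := by
      rw [hab, map_mul, map_mul, map_inv, mul_comm (lam h) (lam b), mul_assoc,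
        mul_inv_cancel₀ hlh, mul_one]
    rw [hlab, hab]
    have h1 := hne (h * b * h⁻¹) (h * b * h⁻¹)
    have h2 := hne b b
    have h3 := hne h g
    have h4 := hne (h * g * h⁻¹) h
    beta_reduce
    rw [div_mul_div_comm, div_eq_div_iff h1 (mul_ne_zero h3 h2)]
    linear_combination (-(lam b)) * key
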